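/- Let X and Y be Banach spaces. If the modulus of asymptotic uniform smoothness of X is pointwise at most the modulus of asymptotic uniform convexity of Y (ρ̄_X(t) ≤ δ̄_Y(t) for all t ≥ 0), then the pair (X,Y) has property (m). -/

import Mathlib

open Filter Topology

noncomputable def minMod {X Y : Type*} [NormedAddCommGroup X] [NormedSpace ℝ X]
    [NormedAddCommGroup Y] [NormedSpace ℝ Y] (T : X →L[ℝ] Y) : ℝ :=
  sInf {r : ℝ | ∃ x : X, ‖x‖ = 1 ∧ ‖T x‖ = r}

def WeaklyNull {X : Type*} [NormedAddCommGroup X] [NormedSpace ℝ X] (x : ℕ → X) : Prop :=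
  ∀ f : X →L[ℝ] ℝ, Tendsto (fun n => f (x n)) atTop (𝓝 0)

def AttainsMinMod {X Y : Type*} [NormedAddCommGroup X] [NormedSpace ℝ X]
    [NormedAddCommGroup Y] [NormedSpace ℝ Y] (T : X →L[ℝ] Y) : Prop :=
  ∃ x : X, ‖x‖ = 1 ∧ ‖T x‖ = minMod T

def PairPropM (X Y : Type*) [NormedAddCommGroup X] [NormedSpace ℝ X]
    [NormedAddCommGroup Y] [NormedSpace ℝ Y] : Prop :=
  ∀ T : X →L[ℝ] Y, 1 ≤ minMod T →
    ∀ (x : X) (y : Y), ‖x‖ ≤ ‖y‖ → ∀ xs : ℕ → X, WeaklyNull xs →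
      limsup (fun n => ‖x + xs n‖) atTop ≤ limsup (fun n => ‖y + T (xs n)‖) atTop

def PairPropO (X Y : Type*) [NormedAddCommGroup X] [NormedSpace ℝ X]
    [NormedAddCommGroup Y] [NormedSpace ℝ Y] : Prop :=
  ∀ T : X →L[ℝ] Y, 1 ≤ minMod T →
    ∀ y : Y, y ≠ 0 → ∀ xs : ℕ → X, WeaklyNull xs →
      limsup (fun n => ‖xs n‖) atTop < limsup (fun n => ‖y + T (xs n)‖) atTop

def PropertyM (X : Type*) [NormedAddCommGroup X] [NormedSpace ℝ X] : Prop :=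
  ∀ x y : X, ‖y‖ ≤ ‖x‖ → ∀ xs : ℕ → X, WeaklyNull xs →
    limsup (fun n => ‖y + xs n‖) atTop ≤ limsup (fun n => ‖x + xs n‖) atTop

def OpialProperty (X : Type*) [NormedAddCommGroup X] [NormedSpace ℝ X] : Prop :=
  ∀ x : X, x ≠ 0 → ∀ xs : ℕ → X, WeaklyNull xs →
    limsup (fun n => ‖xs n‖) atTop < limsup (fun n => ‖x + xs n‖) atTop

def WeakMinimizingProperty (X Y : Type*) [NormedAddCommGroup X] [NormedSpace ℝ X]
    [NormedAddCommGroup Y] [NormedSpace ℝ Y] : Prop :=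
  ∀ T : X →L[ℝ] Y,
    (∃ xs : ℕ → X, (∀ n, ‖xs n‖ = 1) ∧
      Tendsto (fun n => ‖T (xs n)‖) atTop (𝓝 (minMod T)) ∧ ¬ WeaklyNull xs) →
    AttainsMinMod T

noncomputable def asympUnifConvexityModulus (X : Type*) [NormedAddCommGroup X]
    [NormedSpace ℝ X] (t : ℝ) : ℝ :=
  sInf {r : ℝ | ∃ x : X, ‖x‖ = 1 ∧
    r = sSup {s : ℝ | ∃ Z : Submodule ℝ X, FiniteDimensional ℝ (X ⧸ Z) ∧
      s = sInf {u : ℝ | ∃ z ∈ Z, t ≤ ‖z‖ ∧ u = ‖x + z‖ - 1}}}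

noncomputable def asympUnifSmoothnessModulus (X : Type*) [NormedAddCommGroup X]
    [NormedSpace ℝ X] (t : ℝ) : ℝ :=
  sSup {r : ℝ | ∃ x : X, ‖x‖ = 1 ∧
    r = sInf {s : ℝ | ∃ Z : Submodule ℝ X, FiniteDimensional ℝ (X ⧸ Z) ∧
      s = sSup {u : ℝ | ∃ z ∈ Z, ‖z‖ ≤ t ∧ u = ‖x + z‖ - 1}}}

section AuxLemmas

lemma weaklyNull_bound {X : Type*} [NormedAddCommGroup X] [NormedSpace ℝ X]
    {xs : ℕ → X} (h : WeaklyNull xs) : ∃ C : ℝ, 0 ≤ C ∧ ∀ n, ‖xs n‖ ≤ C := by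
  obtain ⟨C', hC'⟩ := banach_steinhaus
    (g := fun n => NormedSpace.inclusionInDoubleDual ℝ X (xs n)) (fun f => by
      obtain ⟨c, hc⟩ := ((h f).norm).bddAbove_range
      exact ⟨c, fun n => by
        simpa [NormedSpace.dual_def] using hc (Set.mem_range_self n)⟩)
  refine ⟨max C' 0, le_max_right _ _, fun n => ?_⟩
  have h1 : ‖(NormedSpace.inclusionInDoubleDualLi ℝ (E := X)) (xs n)‖ ≤ C' := hC' n
  rw [(NormedSpace.inclusionInDoubleDualLi ℝ (E := X)).norm_map (xs n)] at h1
  exact h1.trans (le_max_left _ _)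

lemma weak_findim_tendsto_zero {E : Type*} [NormedAddCommGroup E] [NormedSpace ℝ E]
    [FiniteDimensional ℝ E] {v : ℕ → E}
    (h : ∀ f : E →L[ℝ] ℝ, Tendsto (fun n => f (v n)) atTop (𝓝 0)) :
    Tendsto (fun n => ‖v n‖) atTop (𝓝 0) := by
  rw [← tendsto_zero_iff_norm_tendsto_zero]
  let b := Module.finBasis ℝ E
  have hv : ∀ n, v n = ∑ i, b.repr (v n) i • b i := fun n => (b.sum_repr (v n)).symm
  have h0 : Tendsto (fun n => ∑ i, b.repr (v n) i • b i) atTop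
      (𝓝 (∑ i : Fin (Module.finrank ℝ E), (0:ℝ) • b i)) := by
    refine tendsto_finset_sum _ (fun i _ => Tendsto.smul_const ?_ (b i))
    exact h (LinearMap.toContinuousLinearMap (b.coord i))
  simp only [zero_smul, Finset.sum_const_zero] at h0
  exact Tendsto.congr (fun n => (hv n).symm) h0

lemma weaklyNull_approx {W : Type*} [NormedAddCommGroup W] [NormedSpace ℝ W]
    (Z : Submodule ℝ W) (hZ : FiniteDimensional ℝ (W ⧸ Z))
    {v : ℕ → W} (hv : WeaklyNull v) {ε : ℝ} (hε : 0 < ε) :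
    ∀ᶠ n in atTop, ∃ z ∈ Z, ‖v n - z‖ < ε := by
  set K := Z.topologicalClosure with hK
  haveI : IsClosed (K : Set W) := Z.isClosed_topologicalClosure
  haveI : FiniteDimensional ℝ (W ⧸ K) := by
    have hle : Z ≤ K := Z.le_topologicalClosure
    have hsurj : Function.Surjective (Submodule.mapQ Z K LinearMap.id hle) := by
      intro w
      obtain ⟨m, rfl⟩ := K.mkQ_surjective w
      exact ⟨Z.mkQ m, rfl⟩
    exact Module.Finite.of_surjective _ hsurj
  let q : W →L[ℝ] W ⧸ K :=
    LinearMap.mkContinuous K.mkQ 1 (fun w => by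
      simpa using Submodule.Quotient.norm_mk_le K w)
  have hq : Tendsto (fun n => ‖q (v n)‖) atTop (𝓝 0) :=
    weak_findim_tendsto_zero (fun f => hv (f.comp q))
  have h1 : ∀ᶠ n in atTop, ‖q (v n)‖ < ε / 3 :=
    (hq.eventually (gt_mem_nhds (by linarith)))
  filter_upwards [h1] with n hn
  obtain ⟨m, hm, hmlt⟩ := Submodule.Quotient.norm_mk_lt (q (v n)) (show (0:ℝ) < ε/3 by linarith)
  have hmem : v n - m ∈ K := by
    rw [← Submodule.Quotient.eq]
    exact hm.symm
  have hcl : (v n - m : W) ∈ closure (Z : Set W) := by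
    rwa [← Submodule.topologicalClosure_coe]
  obtain ⟨z, hzZ, hzd⟩ := Metric.mem_closure_iff.mp hcl (ε/3) (by linarith)
  refine ⟨z, hzZ, ?_⟩
  have hre : v n - z = m + ((v n - m) - z) := by abel
  rw [hre]
  calc ‖m + ((v n - m) - z)‖ ≤ ‖m‖ + ‖(v n - m) - z‖ := norm_add_le _ _
    _ < (‖q (v n)‖ + ε/3) + ε/3 := by
        rw [dist_eq_norm] at hzd
        exact add_lt_add hmlt hzd
    _ < ε := by linarith

private lemma innerSup_bounds {X : Type*} [NormedAddCommGroup X] [NormedSpace ℝ X]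
    (u : X) (hu : ‖u‖ = 1) {t : ℝ} (ht : 0 ≤ t) (Z : Submodule ℝ X) :
    0 ≤ sSup {r : ℝ | ∃ z ∈ Z, ‖z‖ ≤ t ∧ r = ‖u + z‖ - 1} ∧
      sSup {r : ℝ | ∃ z ∈ Z, ‖z‖ ≤ t ∧ r = ‖u + z‖ - 1} ≤ t := by
  have hmem : (0:ℝ) ∈ {r : ℝ | ∃ z ∈ Z, ‖z‖ ≤ t ∧ r = ‖u + z‖ - 1} :=
    ⟨0, Z.zero_mem, by simpa [hu] using ht⟩
  have hub : ∀ r ∈ {r : ℝ | ∃ z ∈ Z, ‖z‖ ≤ t ∧ r = ‖u + z‖ - 1}, r ≤ t := by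
    rintro r ⟨z, hz, hzt, rfl⟩
    have := norm_add_le u z
    simp only [hu] at this
    linarith
  exact ⟨le_csSup ⟨t, hub⟩ hmem, csSup_le ⟨0, hmem⟩ hub⟩

private lemma rho_upper {X : Type*} [NormedAddCommGroup X] [NormedSpace ℝ X]
    (x u : X) (hu : ‖u‖ = 1) (hxu : x = ‖x‖ • u) {R t : ℝ} (hR : 0 < R)
    (hxR : ‖x‖ ≤ R) (ht : 0 ≤ t) {c : ℝ}
    (hc : ∀ Z : Submodule ℝ X, FiniteDimensional ℝ (X ⧸ Z) →
      c ≤ sSup {r : ℝ | ∃ w ∈ Z, ‖w‖ ≤ R * t ∧ r = ‖x + w‖}) :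
    c ≤ R * (1 + asympUnifSmoothnessModulus X t) := by
  have key : ∀ Z : Submodule ℝ X, FiniteDimensional ℝ (X ⧸ Z) →
      c ≤ R * (1 + sSup {r : ℝ | ∃ z ∈ Z, ‖z‖ ≤ t ∧ r = ‖u + z‖ - 1}) := by
    intro Z hZ
    set S := sSup {r : ℝ | ∃ z ∈ Z, ‖z‖ ≤ t ∧ r = ‖u + z‖ - 1} with hS
    refine (hc Z hZ).trans
      (csSup_le ⟨‖x‖, 0, Z.zero_mem, by simpa using mul_nonneg hR.le ht, by simp⟩ ?_)
    rintro r ⟨w, hwZ, hwt, rfl⟩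
    set μ := ‖x‖ / R with hμ
    have hμ0 : 0 ≤ μ := by positivity
    have hμ1 : μ ≤ 1 := by rw [hμ, div_le_one hR]; exact hxR
    have hzZ : R⁻¹ • w ∈ Z := Z.smul_mem _ hwZ
    have hznorm : ‖R⁻¹ • w‖ ≤ t := by
      rw [norm_smul, norm_inv, Real.norm_of_nonneg hR.le]
      calc R⁻¹ * ‖w‖ ≤ R⁻¹ * (R * t) := by
            exact mul_le_mul_of_nonneg_left hwt (by positivity)
        _ = t := by field_simp
    have hub : ∀ r ∈ {r : ℝ | ∃ z ∈ Z, ‖z‖ ≤ t ∧ r = ‖u + z‖ - 1}, r ≤ t := by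
      rintro r ⟨z, hz, hzt, rfl⟩
      have := norm_add_le u z
      simp only [hu] at this; linarith
    have h1 : ‖u + R⁻¹ • w‖ - 1 ≤ S := le_csSup ⟨t, hub⟩ ⟨R⁻¹ • w, hzZ, hznorm, rfl⟩
    have h2 : ‖u - R⁻¹ • w‖ - 1 ≤ S := le_csSup ⟨t, hub⟩
      ⟨-(R⁻¹ • w), Z.neg_mem hzZ, by simpa using hznorm, by rw [← sub_eq_add_neg]⟩
    have hμR : μ * R = ‖x‖ := div_mul_cancel₀ _ hR.ne'
    have hid : x + w = ((1+μ)/2) • (R • u + w) + ((1-μ)/2) • (w - R • u) := by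
      rw [hxu, ← hμR]; module
    have hn1 : ‖R • u + w‖ = R * ‖u + R⁻¹ • w‖ := by
      rw [← norm_smul_of_nonneg hR.le, smul_add, smul_inv_smul₀ hR.ne']
    have hn2 : ‖w - R • u‖ = R * ‖u - R⁻¹ • w‖ := by
      rw [← norm_neg, neg_sub, ← norm_smul_of_nonneg hR.le, smul_sub, smul_inv_smul₀ hR.ne']
    calc ‖x + w‖ ≤ (1+μ)/2 * ‖R • u + w‖ + (1-μ)/2 * ‖w - R • u‖ := by
          rw [hid]
          refine (norm_add_le _ _).trans ?_
          rw [norm_smul, norm_smul, Real.norm_of_nonneg (by linarith),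
            Real.norm_of_nonneg (by linarith)]
      _ ≤ R * (1 + S) := by
          rw [hn1, hn2]
          have e1 : (1+μ)/2 * (R * ‖u + R⁻¹ • w‖) ≤ (1+μ)/2 * (R * (1+S)) :=
            mul_le_mul_of_nonneg_left
              (mul_le_mul_of_nonneg_left (by linarith) hR.le) (by linarith)
          have e2 : (1-μ)/2 * (R * ‖u - R⁻¹ • w‖) ≤ (1-μ)/2 * (R * (1+S)) :=
            mul_le_mul_of_nonneg_left
              (mul_le_mul_of_nonneg_left (by linarith) hR.le) (by linarith)
          have e3 : (1+μ)/2 * (R*(1+S)) + (1-μ)/2 * (R*(1+S)) = R*(1+S) := by ring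
          linarith
  set Fset := {s : ℝ | ∃ Z : Submodule ℝ X, FiniteDimensional ℝ (X ⧸ Z) ∧
    s = sSup {r : ℝ | ∃ z ∈ Z, ‖z‖ ≤ t ∧ r = ‖u + z‖ - 1}} with hFset
  have hFne : Fset.Nonempty := ⟨_, ⊤, inferInstance, rfl⟩
  have hcF : c ≤ R * (1 + sInf Fset) := by
    have h4 : c / R - 1 ≤ sInf Fset := by
      refine le_csInf hFne ?_
      rintro s ⟨Z, hZ, rfl⟩
      have h5 := key Z hZ
      rw [div_sub' hR.ne', div_le_iff₀ hR]
      linarith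
    calc c = R * (1 + (c / R - 1)) := by field_simp; ring
      _ ≤ R * (1 + sInf Fset) := by nlinarith [hR]
  refine hcF.trans ?_
  have hmono : sInf Fset ≤ asympUnifSmoothnessModulus X t := by
    refine le_csSup ⟨t, ?_⟩ ⟨u, hu, rfl⟩
    rintro r ⟨u', hu', rfl⟩
    refine csInf_le ?_ (Set.mem_setOf.mpr ⟨⊤, inferInstance, rfl⟩) |>.trans
      (innerSup_bounds u' hu' ht ⊤).2
    exact ⟨0, fun s hs => by
      obtain ⟨Z, _, rfl⟩ := hs
      exact (innerSup_bounds u' hu' ht Z).1⟩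
  nlinarith [hR]

private lemma innerInf_ge {Y : Type*} [NormedAddCommGroup Y] [NormedSpace ℝ Y]
    (v : Y) (t : ℝ) (Z : Submodule ℝ Y) :
    -1 ≤ sInf {r : ℝ | ∃ z ∈ Z, t ≤ ‖z‖ ∧ r = ‖v + z‖ - 1} := by
  rcases Set.eq_empty_or_nonempty {r : ℝ | ∃ z ∈ Z, t ≤ ‖z‖ ∧ r = ‖v + z‖ - 1} with he | hne
  · rw [he, Real.sInf_empty]; norm_num
  · refine le_csInf hne ?_
    rintro r ⟨z, hz, hzt, rfl⟩
    have := norm_nonneg (v + z); linarith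

private lemma Gval_ge {Y : Type*} [NormedAddCommGroup Y] [NormedSpace ℝ Y] (v : Y) (t : ℝ) :
    -1 ≤ sSup {s : ℝ | ∃ Z : Submodule ℝ Y, FiniteDimensional ℝ (Y ⧸ Z) ∧
      s = sInf {r : ℝ | ∃ z ∈ Z, t ≤ ‖z‖ ∧ r = ‖v + z‖ - 1}} := by
  set G := {s : ℝ | ∃ Z : Submodule ℝ Y, FiniteDimensional ℝ (Y ⧸ Z) ∧
      s = sInf {r : ℝ | ∃ z ∈ Z, t ≤ ‖z‖ ∧ r = ‖v + z‖ - 1}} with hG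
  have hne : G.Nonempty := ⟨_, ⊤, inferInstance, rfl⟩
  by_cases hb : BddAbove G
  · obtain ⟨s, hs⟩ := hne
    refine le_trans ?_ (le_csSup hb hs)
    obtain ⟨Z, _, rfl⟩ := hs
    exact innerInf_ge v t Z
  · rw [Real.sSup_of_not_bddAbove hb]; norm_num

private lemma delta_upper {Y : Type*} [NormedAddCommGroup Y] [NormedSpace ℝ Y]
    (v : Y) (hv : ‖v‖ = 1) (t : ℝ) {c : ℝ}
    (hc : ∀ Z : Submodule ℝ Y, FiniteDimensional ℝ (Y ⧸ Z) → ∀ δ > (0:ℝ),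
      ∃ z ∈ Z, t ≤ ‖z‖ ∧ ‖v + z‖ ≤ c + 1 + δ) :
    asympUnifConvexityModulus Y t ≤ c := by
  have hG : sSup {s : ℝ | ∃ Z : Submodule ℝ Y, FiniteDimensional ℝ (Y ⧸ Z) ∧
      s = sInf {r : ℝ | ∃ z ∈ Z, t ≤ ‖z‖ ∧ r = ‖v + z‖ - 1}} ≤ c := by
    refine csSup_le ⟨_, ⊤, inferInstance, rfl⟩ ?_
    rintro s ⟨Z, hZ, rfl⟩
    refine le_of_forall_pos_le_add (fun δ hδ => ?_)
    obtain ⟨z, hzZ, hzt, hznorm⟩ := hc Z hZ δ hδ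
    have hmem : ‖v + z‖ - 1 ∈ {r : ℝ | ∃ z ∈ Z, t ≤ ‖z‖ ∧ r = ‖v + z‖ - 1} :=
      ⟨z, hzZ, hzt, rfl⟩
    have hb : BddBelow {r : ℝ | ∃ z ∈ Z, t ≤ ‖z‖ ∧ r = ‖v + z‖ - 1} := by
      refine ⟨-1, ?_⟩
      rintro r ⟨z', hz', hzt', rfl⟩
      have := norm_nonneg (v + z'); linarith
    exact (csInf_le hb hmem).trans (by linarith)
  refine le_trans (csInf_le ⟨-1, ?_⟩ ⟨v, hv, rfl⟩) hG
  rintro r ⟨v', hv', rfl⟩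
  exact Gval_ge v' t

end AuxLemmas

theorem stmt10 {X Y : Type*} [NormedAddCommGroup X] [NormedSpace ℝ X] [CompleteSpace X]
    [NormedAddCommGroup Y] [NormedSpace ℝ Y] [CompleteSpace Y]
    (h : ∀ t : ℝ, 0 ≤ t → asympUnifSmoothnessModulus X t ≤ asympUnifConvexityModulus Y t) :
    PairPropM X Y := by
  intro T hT x y hxy xs hxs
  -- T expands norms
  have hTlow : ∀ u : X, ‖u‖ ≤ ‖T u‖ := by
    intro u
    rcases eq_or_ne u 0 with rfl | hu0
    · simp
    · have hmem : ‖T (‖u‖⁻¹ • u)‖ ∈ {r : ℝ | ∃ x : X, ‖x‖ = 1 ∧ ‖T x‖ = r} :=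
        ⟨‖u‖⁻¹ • u, by
          rw [norm_smul, norm_inv, norm_norm, inv_mul_cancel₀ (norm_ne_zero_iff.mpr hu0)], rfl⟩
      have h1 : minMod T ≤ ‖T (‖u‖⁻¹ • u)‖ :=
        csInf_le ⟨0, by rintro r ⟨x', -, rfl⟩; exact norm_nonneg _⟩ hmem
      have h2 : (1:ℝ) ≤ ‖u‖⁻¹ * ‖T u‖ := by
        have : ‖T (‖u‖⁻¹ • u)‖ = ‖u‖⁻¹ * ‖T u‖ := by
          rw [map_smul, norm_smul, norm_inv, norm_norm]
        linarith [hT.trans h1, this ▸ (hT.trans h1)]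
      have hu0' : 0 < ‖u‖ := norm_pos_iff.mpr hu0
      calc ‖u‖ = ‖u‖ * 1 := by ring
        _ ≤ ‖u‖ * (‖u‖⁻¹ * ‖T u‖) := by
            exact mul_le_mul_of_nonneg_left h2 hu0'.le
        _ = ‖T u‖ := by field_simp
  obtain ⟨C, hC0, hC⟩ := weaklyNull_bound hxs
  set a := limsup (fun n => ‖x + xs n‖) atTop with ha
  set b := limsup (fun n => ‖y + T (xs n)‖) atTop with hb
  have hbx : IsBoundedUnder (· ≤ ·) atTop (fun n => ‖x + xs n‖) :=
    isBoundedUnder_of ⟨‖x‖ + C, fun n => (norm_add_le _ _).trans (by linarith [hC n])⟩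
  have hby : IsBoundedUnder (· ≤ ·) atTop (fun n => ‖y + T (xs n)‖) :=
    isBoundedUnder_of ⟨‖y‖ + ‖T‖ * C, fun n => (norm_add_le _ _).trans (by
      have := (T.le_opNorm (xs n)).trans (mul_le_mul_of_nonneg_left (hC n) (norm_nonneg T))
      linarith)⟩
  refine le_of_forall_pos_le_add (fun ε hε => ?_)
  set e := ε / 3 with he
  have he0 : 0 < e := by positivity
  -- extraction of a good subsequence
  have hcob : IsCoboundedUnder (· ≤ ·) atTop (fun n => ‖x + xs n‖) :=
    (isBoundedUnder_of ⟨0, fun n => norm_nonneg _⟩ :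
      IsBoundedUnder (· ≥ ·) atTop (fun n => ‖x + xs n‖)).isCoboundedUnder_le
  have hfreq : ∃ᶠ n in atTop, a - e < ‖x + xs n‖ :=
    frequently_lt_of_lt_limsup hcob (by linarith)
  obtain ⟨φ₀, hφ₀m, hφ₀⟩ := extraction_of_frequently_atTop hfreq
  obtain ⟨l, hlmem, φ₁, hφ₁m, hl⟩ := tendsto_subseq_of_bounded (Metric.isBounded_Icc 0 C)
    (x := fun n => ‖xs (φ₀ n)‖) (fun n => ⟨norm_nonneg _, hC _⟩)
  obtain ⟨β, hβmem, φ₂, hφ₂m, hβ⟩ := tendsto_subseq_of_bounded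
    (Metric.isBounded_Icc 0 (‖y‖ + ‖T‖ * C))
    (x := fun n => ‖y + T (xs (φ₀ (φ₁ n)))‖) (fun n => ⟨norm_nonneg _, by
      refine (norm_add_le _ _).trans ?_
      have := (T.le_opNorm (xs (φ₀ (φ₁ n)))).trans
        (mul_le_mul_of_nonneg_left (hC _) (norm_nonneg T))
      linarith⟩)
  set ψ : ℕ → ℕ := fun n => φ₀ (φ₁ (φ₂ n)) with hψdef
  have hψm : StrictMono ψ := hφ₀m.comp (hφ₁m.comp hφ₂m)
  set w : ℕ → X := fun n => xs (ψ n) with hwdef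
  have hw1 : ∀ n, a - e < ‖x + w n‖ := fun n => hφ₀ _
  have hw2 : Tendsto (fun n => ‖w n‖) atTop (𝓝 l) := hl.comp hφ₂m.tendsto_atTop
  have hw3 : Tendsto (fun n => ‖y + T (w n)‖) atTop (𝓝 β) := hβ
  have hwN : WeaklyNull w := fun f => (hxs f).comp hψm.tendsto_atTop
  have hl0 : 0 ≤ l := by
    rw [closure_Icc] at hlmem
    exact hlmem.1
  have hβb : β ≤ b := by
    refine le_of_forall_pos_le_add (fun δ hδ => ?_)
    have hev : ∀ᶠ n in atTop, β - δ ≤ ‖y + T (w n)‖ :=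
      hw3.eventually (eventually_ge_nhds (by linarith))
    have hfr : ∃ᶠ n in atTop, β - δ ≤ ‖y + T (xs n)‖ := by
      rw [frequently_atTop]
      intro N
      obtain ⟨n, hn1, hn2⟩ := (hev.and (eventually_ge_atTop N)).exists
      exact ⟨ψ n, hn2.trans (hψm.le_apply), hn1⟩
    have := le_limsup_of_frequently_le hfr hby
    linarith
  -- case ‖y‖ = 0
  rcases (norm_nonneg y).eq_or_lt with hy0 | hy
  · have hx0 : x = 0 := norm_le_zero_iff.mp (hxy.trans (le_of_eq hy0.symm))
    have hy0' : y = 0 := norm_le_zero_iff.mp (le_of_eq hy0.symm)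
    have h1 : a - e ≤ l := by
      refine ge_of_tendsto hw2 (Eventually.of_forall fun n => ?_)
      have := hw1 n
      rw [hx0, zero_add] at this
      linarith
    have h2 : l ≤ β := by
      refine le_of_tendsto_of_tendsto' hw2 hw3 (fun n => ?_)
      rw [hy0', zero_add]
      exact hTlow (w n)
    linarith
  -- case l = 0
  rcases hl0.eq_or_lt with hl00 | hlpos
  · have hw0 : Tendsto w atTop (𝓝 0) := by
      rw [tendsto_zero_iff_norm_tendsto_zero, hl00]
      exact hw2
    have hxw : Tendsto (fun n => ‖x + w n‖) atTop (𝓝 ‖x‖) := by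
      have : Tendsto (fun n => x + w n) atTop (𝓝 (x + 0)) := tendsto_const_nhds.add hw0
      rw [add_zero] at this
      exact this.norm
    have h1 : a - e ≤ ‖x‖ := ge_of_tendsto hxw (Eventually.of_forall fun n => (hw1 n).le)
    have hTw : Tendsto (fun n => ‖y + T (w n)‖) atTop (𝓝 ‖y‖) := by
      have h2 : Tendsto (fun n => T (w n)) atTop (𝓝 (T 0)) := (T.continuous.tendsto 0).comp hw0
      rw [map_zero] at h2
      have : Tendsto (fun n => y + T (w n)) atTop (𝓝 (y + 0)) := tendsto_const_nhds.add h2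
      rw [add_zero] at this
      exact this.norm
    have hβy : β = ‖y‖ := tendsto_nhds_unique hw3 hTw
    linarith
  -- main case : 0 < ‖y‖ and 0 < l
  set R := ‖y‖ with hR
  set teps := (l + e) / R with hteps
  have hteps0 : 0 ≤ teps := by positivity
  have hRteps : R * teps = l + e := by
    rw [hteps]; field_simp
  -- step (1): upper estimate via the smoothness modulus
  have hA : ∀ Z : Submodule ℝ X, FiniteDimensional ℝ (X ⧸ Z) →
      a - e ≤ sSup {r : ℝ | ∃ w' ∈ Z, ‖w'‖ ≤ R * teps ∧ r = ‖x + w'‖} := by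
    intro Z hZ
    rw [hRteps]
    refine le_of_forall_pos_le_add (fun δ hδ => ?_)
    set δ₁ := min δ (e/2) with hδ₁def
    have hδ₁0 : 0 < δ₁ := lt_min hδ (by positivity)
    have hδ₁a : δ₁ ≤ δ := min_le_left _ _
    have hδ₁b : δ₁ ≤ e/2 := min_le_right _ _
    have h1 := weaklyNull_approx Z hZ hwN hδ₁0
    have h2 : ∀ᶠ n in atTop, ‖w n‖ < l + δ₁ :=
      hw2.eventually (eventually_lt_nhds (by linarith))
    obtain ⟨n, ⟨z, hzZ, hzd⟩, hn2⟩ := (h1.and h2).exists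
    have hzn : ‖z‖ ≤ l + e := by
      have h3 : ‖z‖ ≤ ‖w n‖ + ‖w n - z‖ := by
        calc ‖z‖ = ‖w n - (w n - z)‖ := by congr 1; abel
          _ ≤ ‖w n‖ + ‖w n - z‖ := norm_sub_le _ _
      linarith
    have hbdd : BddAbove {r : ℝ | ∃ w' ∈ Z, ‖w'‖ ≤ l + e ∧ r = ‖x + w'‖} := by
      refine ⟨‖x‖ + (l + e), ?_⟩
      rintro r ⟨w', hw', hwn', rfl⟩
      exact (norm_add_le _ _).trans (by linarith)
    have hmem : ‖x + z‖ ∈ {r : ℝ | ∃ w' ∈ Z, ‖w'‖ ≤ l + e ∧ r = ‖x + w'‖} :=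
      ⟨z, hzZ, hzn, rfl⟩
    have h5 := le_csSup hbdd hmem
    have h6 : a - e < ‖x + w n‖ := hw1 n
    have h7 : ‖x + w n‖ ≤ ‖x + z‖ + ‖w n - z‖ := by
      calc ‖x + w n‖ = ‖(x + z) + (w n - z)‖ := by congr 1; abel
        _ ≤ ‖x + z‖ + ‖w n - z‖ := norm_add_le _ _
    linarith
  -- choose a unit vector u with x = ‖x‖ • u
  obtain ⟨u, hu, hxu⟩ : ∃ u : X, ‖u‖ = 1 ∧ x = ‖x‖ • u := by
    rcases eq_or_ne x 0 with rfl | hx0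
    · have hev : ∀ᶠ n in atTop, l/2 < ‖w n‖ := hw2.eventually (eventually_gt_nhds (by linarith))
      obtain ⟨n, hn⟩ := hev.exists
      have hwn0 : w n ≠ 0 := by
        intro h0; rw [h0, norm_zero] at hn; linarith
      refine ⟨‖w n‖⁻¹ • w n, ?_, by simp⟩
      rw [norm_smul, norm_inv, norm_norm, inv_mul_cancel₀ (norm_ne_zero_iff.mpr hwn0)]
    · refine ⟨‖x‖⁻¹ • x, ?_, (smul_inv_smul₀ (norm_ne_zero_iff.mpr hx0) x).symm⟩
      rw [norm_smul, norm_inv, norm_norm, inv_mul_cancel₀ (norm_ne_zero_iff.mpr hx0)]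
  have hArho : a - e ≤ R * (1 + asympUnifSmoothnessModulus X teps) :=
    rho_upper x u hu hxu hy hxy hteps0 hA
  -- step (2): lower estimate via the convexity modulus
  set v := R⁻¹ • y with hv
  have hvu : ‖v‖ = 1 := by
    rw [hv, norm_smul, Real.norm_eq_abs, abs_of_nonneg (inv_nonneg.mpr hy.le)]
    exact inv_mul_cancel₀ hy.ne'
  set un : ℕ → Y := fun n => R⁻¹ • T (w n) with hun
  have hunN : WeaklyNull un := by
    intro f
    have h' := hwN (f.comp T)
    have h'' := h'.const_mul R⁻¹
    rw [mul_zero] at h''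
    refine h''.congr (fun n => ?_)
    rw [hun]
    simp [map_smul, smul_eq_mul]
  have hunlow : ∀ n, R⁻¹ * ‖w n‖ ≤ ‖un n‖ := by
    intro n
    rw [hun, norm_smul, Real.norm_eq_abs, abs_of_nonneg (inv_nonneg.mpr hy.le)]
    exact mul_le_mul_of_nonneg_left (hTlow (w n)) (by positivity)
  set t0 := l / R with ht0
  have ht00 : 0 < t0 := by positivity
  have hteq : teps - t0 = e / R := by rw [hteps, ht0]; ring
  have hB : asympUnifConvexityModulus Y teps ≤ (β + e)/R - 1 := by
    refine delta_upper v hvu teps ?_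
    intro Z hZ δ hδ
    set δ₃ := min (δ/4) (t0/8) with hδ₃def
    have hδ₃0 : 0 < δ₃ := lt_min (by linarith) (by linarith)
    have hδ₃a : δ₃ ≤ δ/4 := min_le_left _ _
    have hδ₃b : δ₃ ≤ t0/8 := min_le_right _ _
    have E1 := weaklyNull_approx Z hZ hunN hδ₃0
    have E2 : ∀ᶠ n in atTop, t0 - δ₃ < R⁻¹ * ‖w n‖ := by
      have hto : Tendsto (fun n => R⁻¹ * ‖w n‖) atTop (𝓝 (R⁻¹ * l)) := hw2.const_mul R⁻¹
      have hrl : R⁻¹ * l = t0 := by rw [ht0]; field_simp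
      rw [hrl] at hto
      exact hto.eventually (eventually_gt_nhds (by linarith))
    have E3 : ∀ᶠ n in atTop, ‖v + un n‖ ≤ β/R + δ₃ := by
      have hvn : ∀ n, ‖v + un n‖ = R⁻¹ * ‖y + T (w n)‖ := by
        intro n
        rw [hv, hun, ← smul_add, norm_smul, Real.norm_eq_abs,
          abs_of_nonneg (inv_nonneg.mpr hy.le)]
      have hto : Tendsto (fun n => ‖v + un n‖) atTop (𝓝 (R⁻¹ * β)) :=
        (hw3.const_mul R⁻¹).congr (fun n => (hvn n).symm)
      have hβR : R⁻¹ * β = β / R := by rw [inv_mul_eq_div]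
      rw [hβR] at hto
      exact hto.eventually (eventually_le_nhds (by linarith))
    obtain ⟨n, ⟨z, hzZ, hzd⟩, hn2, hn3⟩ := (E1.and (E2.and E3)).exists
    have hun_lb : t0 - δ₃ < ‖un n‖ := lt_of_lt_of_le hn2 (hunlow n)
    have hz_lb : t0 - 2*δ₃ ≤ ‖z‖ := by
      have h3 : ‖un n‖ ≤ ‖z‖ + ‖un n - z‖ := by
        calc ‖un n‖ = ‖z + (un n - z)‖ := by congr 1; abel
          _ ≤ ‖z‖ + ‖un n - z‖ := norm_add_le _ _
      linarith
    have hz0 : 0 < ‖z‖ := by linarith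
    set m := max 1 (teps / ‖z‖) with hm
    have hm1 : 1 ≤ m := le_max_left _ _
    set z' := m • z with hz'
    have hz'Z : z' ∈ Z := Z.smul_mem _ hzZ
    have hz'n : ‖z'‖ = max ‖z‖ teps := by
      rw [hz', norm_smul, Real.norm_eq_abs, abs_of_nonneg (by linarith)]
      rcases le_total (teps / ‖z‖) 1 with hcs | hcs
      · rw [hm, max_eq_left hcs, one_mul, max_eq_left]
        rwa [div_le_one hz0] at hcs
      · rw [hm, max_eq_right hcs, div_mul_cancel₀ _ hz0.ne', max_eq_right]
        exact (one_le_div hz0).mp hcs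
    have hz'ge : teps ≤ ‖z'‖ := by rw [hz'n]; exact le_max_right _ _
    have hz'd : ‖z' - z‖ ≤ teps - (t0 - 2*δ₃) := by
      have hzz : z' - z = (m - 1) • z := by rw [hz', sub_smul, one_smul]
      rw [hzz, norm_smul, Real.norm_eq_abs, abs_of_nonneg (by linarith)]
      rcases le_total (teps / ‖z‖) 1 with hcs | hcs
      · rw [hm, max_eq_left hcs]
        simp only [sub_self, zero_mul]
        have : 0 < e / R := by positivity
        linarith
      · rw [hm, max_eq_right hcs, sub_mul, div_mul_cancel₀ _ hz0.ne', one_mul]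
        linarith
    refine ⟨z', hz'Z, hz'ge, ?_⟩
    have htri : ‖v + z'‖ ≤ ‖v + un n‖ + (‖un n - z‖ + ‖z' - z‖) := by
      calc ‖v + z'‖ = ‖(v + un n) + ((z - un n) + (z' - z))‖ := by congr 1; abel
        _ ≤ ‖v + un n‖ + ‖(z - un n) + (z' - z)‖ := norm_add_le _ _
        _ ≤ ‖v + un n‖ + (‖z - un n‖ + ‖z' - z‖) := by
            linarith [norm_add_le (z - un n) (z' - z)]
        _ = ‖v + un n‖ + (‖un n - z‖ + ‖z' - z‖) := by rw [norm_sub_rev]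
    have hsum : β/R + e/R = (β+e)/R := by ring
    linarith
  -- final chain
  have hchain := h teps hteps0
  have hfin : R * (1 + asympUnifSmoothnessModulus X teps) ≤ β + e := by
    have h5 : 1 + asympUnifSmoothnessModulus X teps ≤ (β + e)/R := by linarith
    calc R * (1 + asympUnifSmoothnessModulus X teps) ≤ R * ((β + e)/R) :=
          mul_le_mul_of_nonneg_left h5 hy.le
      _ = β + e := by field_simp
  linarith
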